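/- Let G = (V,E) be a finite simple graph, let 0 ≤ α ≤ 1, and let k ≤ |V|. Let S ⊆ V with |S| = k be a set of k vertices of largest degrees, i.e., d(u) ≥ d(w) for every u ∈ S and w ∈ V∖S. Then for every set O ⊆ V with |O| = k, cov_α(S) ≥ cov_α(O) − 2k². -/

import Mathlib

open Finset

/-- Number of edges of `G` with both endpoints in `X`. -/
noncomputable def mIn {V : Type*} (G : SimpleGraph V) (X : Finset V) : ℕ :=
  {e ∈ G.edgeSet | ∀ v ∈ e, v ∈ X}.ncard

/-- Number of edges of `G` with one endpoint in `X` and the other in `Y`. -/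
noncomputable def mBtw {V : Type*} (G : SimpleGraph V) (X Y : Finset V) : ℕ :=
  {e ∈ G.edgeSet | ∃ u ∈ X, ∃ w ∈ Y, e = s(u, w)}.ncard

/-- `cov_α(S) = (1-α)·m(S) + α·m(S, V∖S)`. -/
noncomputable def cov {V : Type*} [Fintype V] [DecidableEq V] (G : SimpleGraph V) (α : ℝ)
    (S : Finset V) : ℝ :=
  (1 - α) * mIn G S + α * mBtw G S Sᶜ

section helpers
open scoped Classical
variable {V : Type*} [Fintype V] [DecidableEq V] (G : SimpleGraph V) [DecidableRel G.Adj]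

lemma mIn_eq (X : Finset V) :
    mIn G X = (G.edgeFinset.filter (fun e => ∀ v ∈ e, v ∈ X)).card := by
  rw [mIn, ← Set.ncard_coe_finset]
  congr 1
  ext e
  simp [SimpleGraph.mem_edgeFinset]

lemma mBtw_eq (X Y : Finset V) :
    mBtw G X Y = (G.edgeFinset.filter (fun e => ∃ u ∈ X, ∃ w ∈ Y, e = s(u, w))).card := by
  rw [mBtw, ← Set.ncard_coe_finset]
  congr 1
  ext e
  simp [SimpleGraph.mem_edgeFinset]

lemma handshake (X : Finset V) :
    ∑ v ∈ X, G.degree v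
      = 2 * (G.edgeFinset.filter (fun e => ∀ v ∈ e, v ∈ X)).card
        + (G.edgeFinset.filter (fun e => ∃ u ∈ X, ∃ w ∈ Xᶜ, e = s(u, w))).card := by
  have h1 : ∀ v ∈ X, G.degree v = (G.edgeFinset.filter (fun e => v ∈ e)).card := by
    intro v _
    rw [← SimpleGraph.card_incidenceFinset_eq_degree, SimpleGraph.incidenceFinset_eq_filter]
  rw [Finset.sum_congr rfl h1]
  simp only [Finset.card_filter]
  rw [Finset.sum_comm (s := X) (t := G.edgeFinset)]
  rw [Finset.mul_sum, ← Finset.sum_add_distrib]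
  refine Finset.sum_congr rfl ?_
  intro e he
  rw [SimpleGraph.mem_edgeFinset] at he
  induction e with
  | _ a b =>
    have hab : a ≠ b := ((SimpleGraph.mem_edgeSet (G := G)).mp he).ne
    by_cases ha : a ∈ X <;> by_cases hb : b ∈ X <;>
      simp [Sym2.mem_iff, Sym2.eq_iff, ha, hb, Finset.sum_ite_eq', hab, hab.symm,
        Finset.filter_or, Finset.filter_eq', Finset.card_union_of_disjoint]
    · intro u hu w hw
      exact ⟨fun h1 h2 => hw (h2 ▸ hb), fun h1 h2 => hw (h1 ▸ ha)⟩
    · exact ⟨a, ha, b, hb, fun h => (h rfl rfl).elim⟩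
    · exact ⟨b, hb, a, ha, fun _ => ⟨rfl, rfl⟩⟩
    · intro u hu w hw
      exact ⟨fun h _ => ha (h ▸ hu), fun _ h => hb (h ▸ hu)⟩

lemma sum_deg_le (S O : Finset V) (hcard : O.card = S.card)
    (hStop : ∀ u ∈ S, ∀ w ∉ S, G.degree w ≤ G.degree u) :
    ∑ v ∈ O, G.degree v ≤ ∑ v ∈ S, G.degree v := by
  have hO : ∑ v ∈ O \ S, G.degree v + ∑ v ∈ O ∩ S, G.degree v = ∑ v ∈ O, G.degree v := by
    rw [← Finset.sum_sdiff (Finset.inter_subset_left : O ∩ S ⊆ O),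
      Finset.sdiff_inter_self_left]
  have hS : ∑ v ∈ S \ O, G.degree v + ∑ v ∈ O ∩ S, G.degree v = ∑ v ∈ S, G.degree v := by
    rw [← Finset.sum_sdiff (Finset.inter_subset_right : O ∩ S ⊆ S),
      Finset.inter_comm, Finset.sdiff_inter_self_left]
  have hc : (O \ S).card = (S \ O).card := Finset.card_sdiff_comm hcard
  have key : ∑ v ∈ O \ S, G.degree v ≤ ∑ v ∈ S \ O, G.degree v := by
    rcases Finset.eq_empty_or_nonempty (S \ O) with h | h
    · have : (O \ S) = ∅ := Finset.card_eq_zero.mp (by rw [hc, h, Finset.card_empty])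
      simp [this, h]
    · obtain ⟨u, hu, hmin⟩ := Finset.exists_min_image (S \ O) (fun v => G.degree v) h
      have hu' : u ∈ S := (Finset.mem_sdiff.mp hu).1
      calc ∑ v ∈ O \ S, G.degree v ≤ (O \ S).card • G.degree u := by
            apply Finset.sum_le_card_nsmul
            intro w hw
            exact hStop u hu' w (Finset.mem_sdiff.mp hw).2
        _ = (S \ O).card • G.degree u := by rw [hc]
        _ ≤ ∑ v ∈ S \ O, G.degree v := Finset.card_nsmul_le_sum _ _ _ hmin
  omega

lemma mIn_le (X : Finset V) :
    (G.edgeFinset.filter (fun e => ∀ v ∈ e, v ∈ X)).card ≤ X.card ^ 2 := by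
  have h1 : (G.edgeFinset.filter (fun e => ∀ v ∈ e, v ∈ X)) ⊆ X.sym2 := by
    intro e he
    rw [Finset.mem_sym2_iff]
    exact (Finset.mem_filter.mp he).2
  calc (G.edgeFinset.filter (fun e => ∀ v ∈ e, v ∈ X)).card
      ≤ X.sym2.card := Finset.card_le_card h1
    _ = Nat.choose (X.card + 1) 2 := Finset.card_sym2 X
    _ = (X.card + 1) * X.card / 2 := by rw [Nat.choose_two_right, Nat.add_sub_cancel]
    _ ≤ X.card ^ 2 := by
        have h2 : (X.card + 1) * X.card ≤ 2 * X.card ^ 2 := by nlinarith [Nat.le_self_pow (two_ne_zero) X.card]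
        calc (X.card + 1) * X.card / 2 ≤ 2 * X.card ^ 2 / 2 := Nat.div_le_div_right h2
          _ = X.card ^ 2 := Nat.mul_div_cancel_left _ (by norm_num)

end helpers

theorem stmt0 {V : Type*} [Fintype V] [DecidableEq V] (G : SimpleGraph V)
    [DecidableRel G.Adj] (α : ℝ) (hα0 : 0 ≤ α) (hα1 : α ≤ 1)
    (k : ℕ) (hk : k ≤ Fintype.card V)
    (S : Finset V) (hScard : S.card = k)
    (hStop : ∀ u ∈ S, ∀ w ∉ S, G.degree w ≤ G.degree u) :
    ∀ O : Finset V, O.card = k → cov G α S ≥ cov G α O - 2 * (k : ℝ) ^ 2 := by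
  classical
  intro O hOcard
  have hDS := handshake G S
  have hDO := handshake G O
  have hD : ∑ v ∈ O, G.degree v ≤ ∑ v ∈ S, G.degree v :=
    sum_deg_le G S O (by rw [hOcard, hScard]) hStop
  have haS : (G.edgeFinset.filter (fun e => ∀ v ∈ e, v ∈ S)).card ≤ k ^ 2 := by
    rw [← hScard]; exact mIn_le G S
  have haO : (G.edgeFinset.filter (fun e => ∀ v ∈ e, v ∈ O)).card ≤ k ^ 2 := by
    rw [← hOcard]; exact mIn_le G O
  rw [cov, cov, mIn_eq, mIn_eq, mBtw_eq, mBtw_eq]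
  set a := (G.edgeFinset.filter (fun e => ∀ v ∈ e, v ∈ S)).card with ha
  set b := (G.edgeFinset.filter (fun e => ∃ u ∈ S, ∃ w ∈ Sᶜ, e = s(u, w))).card with hb
  set c := (G.edgeFinset.filter (fun e => ∀ v ∈ e, v ∈ O)).card with hcdef
  set d := (G.edgeFinset.filter (fun e => ∃ u ∈ O, ∃ w ∈ Oᶜ, e = s(u, w))).card with hd
  rw [hDS, hDO] at hD
  have hDr : (2 * c + d : ℝ) ≤ 2 * a + b := by exact_mod_cast hD
  have haSr : (a : ℝ) ≤ (k : ℝ) ^ 2 := by exact_mod_cast haS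
  have haOr : (c : ℝ) ≤ (k : ℝ) ^ 2 := by exact_mod_cast haO
  have hb0 : (0 : ℝ) ≤ b := Nat.cast_nonneg b
  have hd0 : (0 : ℝ) ≤ d := Nat.cast_nonneg d
  have ha0 : (0 : ℝ) ≤ a := Nat.cast_nonneg a
  have hc0 : (0 : ℝ) ≤ c := Nat.cast_nonneg c
  nlinarith [mul_nonneg hα0 (sub_nonneg.mpr hDr), mul_nonneg hα0 (sub_nonneg.mpr haSr),
    mul_nonneg hα0 (sub_nonneg.mpr haOr), mul_nonneg (sub_nonneg.mpr hα1) (sub_nonneg.mpr haSr),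
    mul_nonneg (sub_nonneg.mpr hα1) (sub_nonneg.mpr haOr), mul_nonneg hα0 hc0,
    mul_nonneg hα0 ha0]
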